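/- arXiv:1812.08457 — 4 statements merged into one kernel-verified Lean document; each statement's English description precedes it below -/
import Mathlib

section
/- Let α ≥ 1 and p : ℝ → ℝ be continuous and bounded. Then every solution x of the differential equation x'' + |x|^{α-1} x = p(t) exists globally on ℝ. More precisely, setting E(t) = (1/2) x'(t)² + (1/(α+1)) |x(t)|^{α+1}, one has √(E(t)) ≤ √(E(t₀)) + (1/√2) |∫_{t₀}^{t} |p(s)| ds| for all t, so E is bounded on finite intervals. -/
theorem stmt0 (α : ℝ) (hα : 1 ≤ α) (p x v : ℝ → ℝ)
    (hp_cont : Continuous p) (hp_bdd : ∃ M, ∀ t, |p t| ≤ M)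
    (hx : ∀ t, HasDerivAt x (v t) t)
    (hv : ∀ t, HasDerivAt v (p t - |x t| ^ (α - 1) * x t) t)
    (E : ℝ → ℝ)
    (hE : ∀ t, E t = (1/2) * v t ^ 2 + (1/(α+1)) * |x t| ^ (α+1)) :
    ∀ t₀ t : ℝ, Real.sqrt (E t) ≤ Real.sqrt (E t₀) + (1 / Real.sqrt 2) * abs (∫ s in t₀..t, |p s|) := by
  have hα1 : (0:ℝ) < α + 1 := by linarith
  -- key rpow identity
  have hkey : ∀ (y β : ℝ), (y ^ 2) ^ (β/2 : ℝ) = |y| ^ β := by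
    intro y β
    rw [← sq_abs, ← Real.rpow_natCast |y| 2, ← Real.rpow_mul (abs_nonneg y)]
    norm_num
    rw [show (2:ℝ) * (β/2) = β by ring]
  -- derivative of x^2
  have hx2 : ∀ s, HasDerivAt (fun s => x s ^ 2) (2 * x s * v s) s := by
    intro s
    have h := (hx s).pow 2
    refine h.congr_deriv ?_
    push_cast
    ring
  -- derivative of |x|^(α+1)
  have habs : ∀ s, HasDerivAt (fun s => |x s| ^ (α+1)) ((α+1) * (|x s| ^ (α-1) * (x s * v s))) s := by
    intro s
    have h2 : (1:ℝ) ≤ (α+1)/2 := by linarith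
    have hr := (Real.hasDerivAt_rpow_const (x := x s ^ 2) (p := (α+1)/2) (Or.inr h2)).comp s (hx2 s)
    have hfun : (fun s => (x s ^ 2) ^ ((α+1)/2 : ℝ)) = fun s => |x s| ^ (α+1) := by
      funext u; exact hkey (x u) (α+1)
    rw [Function.comp_def] at hr
    rw [hfun] at hr
    refine hr.congr_deriv ?_
    rw [show (α+1)/2 - 1 = (α-1)/2 by ring, hkey (x s) (α-1)]
    ring
  -- derivative of E
  have hEd : ∀ s, HasDerivAt E (v s * p s) s := by
    intro s
    have h1 := ((hv s).pow 2).const_mul (1/2 : ℝ)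
    have h2 := (habs s).const_mul (1/(α+1) : ℝ)
    have h := h1.add h2
    have hEeq : E = fun s => (1/2) * v s ^ 2 + (1/(α+1)) * |x s| ^ (α+1) := funext hE
    rw [hEeq]
    refine h.congr_deriv ?_
    field_simp
    ring
  -- energy nonneg
  have hEnn : ∀ s, 0 ≤ E s := by
    intro s
    rw [hE s]
    have h1 := mul_nonneg (one_div_nonneg.mpr hα1.le)
      (Real.rpow_nonneg (abs_nonneg (x s)) (α+1))
    nlinarith [sq_nonneg (v s)]
  -- velocity bound
  have hvb : ∀ s, |v s| ≤ Real.sqrt (2 * E s) := by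
    intro s
    rw [← Real.sqrt_sq_eq_abs]
    apply Real.sqrt_le_sqrt
    rw [hE s]
    have h1 := mul_nonneg (one_div_nonneg.mpr hα1.le)
      (Real.rpow_nonneg (abs_nonneg (x s)) (α+1))
    nlinarith
  have hcv : Continuous v := by
    rw [continuous_iff_continuousAt]; intro s; exact (hv s).continuousAt
  have hcE : Continuous E := by
    rw [continuous_iff_continuousAt]; intro s; exact (hEd s).continuousAt
  have hs2 : (0:ℝ) < Real.sqrt 2 := Real.sqrt_pos.mpr (by norm_num)
  have hss : Real.sqrt 2 * Real.sqrt 2 = 2 := Real.mul_self_sqrt (by norm_num)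
  -- key estimate with ε
  have key : ∀ ε : ℝ, 0 < ε → ∀ a b : ℝ, a ≤ b →
      |Real.sqrt (E b + ε) - Real.sqrt (E a + ε)| ≤ (1/Real.sqrt 2) * ∫ s in a..b, |p s| := by
    intro ε hε a b hab
    have hpos : ∀ s, 0 < E s + ε := fun s => by linarith [hEnn s]
    have hFd : ∀ s, HasDerivAt (fun u => Real.sqrt (E u + ε))
        (v s * p s / (2 * Real.sqrt (E s + ε))) s := by
      intro s
      have h1 := (Real.hasDerivAt_sqrt (hpos s).ne').comp s ((hEd s).add_const ε)
      refine h1.congr_deriv ?_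
      field_simp
    have hF'cont : Continuous (fun s => v s * p s / (2 * Real.sqrt (E s + ε))) := by
      apply Continuous.div (hcv.mul hp_cont)
      · exact continuous_const.mul ((hcE.add continuous_const).sqrt)
      · intro s
        have := Real.sqrt_pos.mpr (hpos s)
        positivity
    have hint : IntervalIntegrable (fun s => v s * p s / (2 * Real.sqrt (E s + ε)))
        MeasureTheory.volume a b := hF'cont.intervalIntegrable a b
    have hftc : ∫ s in a..b, v s * p s / (2 * Real.sqrt (E s + ε))
        = Real.sqrt (E b + ε) - Real.sqrt (E a + ε) :=
      intervalIntegral.integral_eq_sub_of_hasDerivAt (fun s _ => hFd s) hint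
    have hbound : ∀ s, |v s * p s / (2 * Real.sqrt (E s + ε))| ≤ (1/Real.sqrt 2) * |p s| := by
      intro s
      set S := Real.sqrt (E s + ε) with hSdef
      have hS : 0 < S := Real.sqrt_pos.mpr (hpos s)
      have h1 : |v s| ≤ Real.sqrt 2 * S := by
        calc |v s| ≤ Real.sqrt (2 * E s) := hvb s
          _ ≤ Real.sqrt (2 * (E s + ε)) := Real.sqrt_le_sqrt (by linarith)
          _ = Real.sqrt 2 * S := by rw [hSdef, Real.sqrt_mul (by norm_num)]
      rw [abs_div, abs_mul, abs_of_pos (by positivity : (0:ℝ) < 2 * S),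
        div_le_iff₀ (by positivity : (0:ℝ) < 2 * S)]
      have h2 : (1/Real.sqrt 2) * |p s| * (2 * S) = Real.sqrt 2 * S * |p s| := by
        field_simp
        linear_combination (-|p s|) * hss
      rw [h2]
      have := mul_le_mul_of_nonneg_right h1 (abs_nonneg (p s))
      linarith
    calc |Real.sqrt (E b + ε) - Real.sqrt (E a + ε)|
        = |∫ s in a..b, v s * p s / (2 * Real.sqrt (E s + ε))| := by rw [hftc]
      _ ≤ ∫ s in a..b, |v s * p s / (2 * Real.sqrt (E s + ε))| :=
          intervalIntegral.abs_integral_le_integral_abs hab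
      _ ≤ ∫ s in a..b, (1/Real.sqrt 2) * |p s| := by
          apply intervalIntegral.integral_mono_on hab hint.abs
            ((continuous_const.mul hp_cont.abs).intervalIntegrable a b)
          intro s _
          exact hbound s
      _ = (1/Real.sqrt 2) * ∫ s in a..b, |p s| := intervalIntegral.integral_const_mul _ _
  intro t₀ t
  have keyall : ∀ ε : ℝ, 0 < ε →
      Real.sqrt (E t + ε) ≤ Real.sqrt (E t₀ + ε) + (1/Real.sqrt 2) * abs (∫ s in t₀..t, |p s|) := by
    intro ε hε
    rcases le_total t₀ t with h | h
    · have hk := key ε hε t₀ t h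
      have h2 : (0:ℝ) ≤ ∫ s in t₀..t, |p s| :=
        intervalIntegral.integral_nonneg h (fun s _ => abs_nonneg _)
      rw [abs_of_nonneg h2]
      have := (abs_sub_le_iff.mp hk).1
      linarith
    · have hk := key ε hε t t₀ h
      have h2 : (0:ℝ) ≤ ∫ s in t..t₀, |p s| :=
        intervalIntegral.integral_nonneg h (fun s _ => abs_nonneg _)
      have h3 : abs (∫ s in t₀..t, |p s|) = ∫ s in t..t₀, |p s| := by
        rw [intervalIntegral.integral_symm, abs_neg, abs_of_nonneg h2]
      rw [h3]
      have := (abs_sub_le_iff.mp hk).2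
      linarith
  apply le_of_forall_pos_le_add
  intro δ hδ
  have hε : (0:ℝ) < δ^2 := by positivity
  have h1 := keyall (δ^2) hε
  have h2 : Real.sqrt (E t) ≤ Real.sqrt (E t + δ^2) := Real.sqrt_le_sqrt (by linarith)
  have h3 : Real.sqrt (E t₀ + δ^2) ≤ Real.sqrt (E t₀) + δ := by
    rw [Real.sqrt_le_iff]
    constructor
    · positivity
    · nlinarith [Real.sqrt_nonneg (E t₀), Real.sq_sqrt (hEnn t₀), hδ.le]
  linarith
end

section
/- Let α ≥ 1, Λ > 0, c, s as above, and let γ > 0 satisfy γ^{(α+3)/2} · (2/(α+3)) · Λ^{α+1} = 1. Then the map η : 𝕊¹ × (0,∞) → ℝ² \ {0}, η(θ, r) = (γ r^{2/(α+3)} c(θ), γ^{(α+1)/2} r^{(α+1)/(α+3)} s(θ)), is a symplectic diffeomorphism, i.e. it is bijective with smooth inverse and dx ∧ dv = dθ ∧ dr. -/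
open Set

private lemma habs_deriv (α : ℝ) (hα : 1 ≤ α) (x : ℝ) :
    HasDerivAt (fun y : ℝ => |y| ^ (α - 1) * y) (α * |x| ^ (α - 1)) x := by
  rcases lt_trichotomy x 0 with hx | hx | hx
  · have h1 : HasDerivAt (fun y : ℝ => -((-y) ^ α)) (α * (-x) ^ (α - 1)) x := by
      have h2 : HasDerivAt (fun y : ℝ => (-y) ^ α) (α * (-x) ^ (α - 1) * (-1)) x :=
        (Real.hasDerivAt_rpow_const (x := -x) (Or.inl (by linarith))).comp x (hasDerivAt_neg x)
      simpa using h2.fun_neg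
    have h3 : (fun y : ℝ => |y| ^ (α - 1) * y) =ᶠ[nhds x] fun y : ℝ => -((-y) ^ α) := by
      filter_upwards [Iio_mem_nhds hx] with y hy
      have hy' : (y:ℝ) < 0 := hy
      rw [abs_of_neg hy', show α = (α - 1) + 1 by ring, Real.rpow_add_one (by linarith : -y ≠ 0)]
      ring
    have h4 := h1.congr_of_eventuallyEq h3
    rwa [abs_of_neg hx]
  · subst hx
    rcases eq_or_lt_of_le hα with h1 | h1
    · have h2 : (fun y : ℝ => |y| ^ (α - 1) * y) = fun y : ℝ => y := by
        funext y; rw [← h1]; simp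
      rw [h2, ← h1]
      simpa using hasDerivAt_id' (0:ℝ)
    · have hval : α * |(0:ℝ)| ^ (α - 1) = 0 := by
        rw [abs_zero, Real.zero_rpow (by linarith), mul_zero]
      rw [hval, hasDerivAt_iff_tendsto_slope]
      have key : ∀ y ∈ ({(0:ℝ)}ᶜ : Set ℝ), |y| ^ (α - 1) = slope (fun y : ℝ => |y| ^ (α - 1) * y) 0 y := by
        intro y hy
        have hy' : y ≠ 0 := hy
        rw [slope_def_field]
        field_simp
        simp
      have htend : Filter.Tendsto (fun y : ℝ => |y| ^ (α - 1)) (nhdsWithin 0 {(0:ℝ)}ᶜ) (nhds 0) := by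
        have hcont : Filter.Tendsto (fun y : ℝ => |y| ^ (α - 1)) (nhds 0) (nhds (|(0:ℝ)| ^ (α - 1))) := by
          exact ((Real.continuousAt_rpow_const _ _ (Or.inr (by linarith))).comp
            (continuous_abs.continuousAt)).tendsto
        rw [abs_zero, Real.zero_rpow (by linarith)] at hcont
        exact hcont.mono_left nhdsWithin_le_nhds
      exact Filter.Tendsto.congr' (Filter.eventuallyEq_of_mem self_mem_nhdsWithin key) htend
  · have h1 : HasDerivAt (fun y : ℝ => y ^ α) (α * x ^ (α - 1)) x :=
      Real.hasDerivAt_rpow_const (Or.inl (ne_of_gt hx))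
    have h3 : (fun y : ℝ => |y| ^ (α - 1) * y) =ᶠ[nhds x] fun y : ℝ => y ^ α := by
      filter_upwards [Ioi_mem_nhds hx] with y hy
      have hy' : (0:ℝ) < y := hy
      rw [abs_of_pos hy', ← Real.rpow_add_one (ne_of_gt hy') (α - 1)]
      norm_num
    have h4 := h1.congr_of_eventuallyEq h3
    rwa [abs_of_pos hx]

private lemma habs_pow_succ (α : ℝ) (hα : 1 ≤ α) (x : ℝ) :
    x * (|x| ^ (α - 1) * x) = |x| ^ (α + 1) := by
  rcases eq_or_ne x 0 with hx | hx
  · subst hx; rw [abs_zero, Real.zero_rpow (by linarith : α + 1 ≠ 0)]; ring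
  · have habs : (0:ℝ) < |x| := abs_pos.2 hx
    have h2 : x * x = |x| ^ (2:ℝ) := by
      rw [show ((2:ℝ)) = ((2:ℕ):ℝ) by norm_num, Real.rpow_natCast, sq_abs]; ring
    calc x * (|x| ^ (α - 1) * x) = |x| ^ (α - 1) * (x * x) := by ring
      _ = |x| ^ (α - 1) * |x| ^ (2:ℝ) := by rw [h2]
      _ = |x| ^ (α - 1 + 2) := by rw [← Real.rpow_add habs]
      _ = |x| ^ (α + 1) := by ring_nf

private lemma habs_pow_deriv (α : ℝ) (hα : 1 ≤ α) (x : ℝ) :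
    HasDerivAt (fun y : ℝ => |y| ^ (α + 1)) ((α + 1) * (|x| ^ (α - 1) * x)) x := by
  have h1 := (habs_deriv α hα x).fun_mul (hasDerivAt_id x)
  have h2 : (fun y : ℝ => |y| ^ (α - 1) * y * y) = fun y : ℝ => |y| ^ (α + 1) := by
    funext y
    rw [← habs_pow_succ α hα y]; ring
  simp only [id] at h1
  rw [h2] at h1
  exact h1.congr_deriv (by ring)

private lemma glip (α : ℝ) (hα : 1 ≤ α) (R : ℝ) (hR : 0 ≤ R) :
    LipschitzOnWith ⟨α * R ^ (α - 1), by positivity⟩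
      (fun x : ℝ => |x| ^ (α - 1) * x) (Icc (-R) R) := by
  apply Convex.lipschitzOnWith_of_nnnorm_hasDerivWithin_le
    (f' := fun x => α * |x| ^ (α - 1)) (convex_Icc _ _)
  · intro x _
    exact (habs_deriv α hα x).hasDerivWithinAt
  · intro x hx
    refine NNReal.coe_le_coe.1 ?_
    simp only [coe_nnnorm, NNReal.coe_mk]
    rw [Real.norm_eq_abs]
    have h1 : |x| ≤ R := abs_le.2 ⟨hx.1, hx.2⟩
    have h2 : |x| ^ (α - 1) ≤ R ^ (α - 1) :=
      Real.rpow_le_rpow (abs_nonneg x) h1 (by linarith)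
    have h3 : (0:ℝ) ≤ |x| ^ (α - 1) := Real.rpow_nonneg (abs_nonneg x) _
    rw [abs_of_nonneg (by positivity)]
    change α * |x| ^ (α - 1) ≤ α * R ^ (α - 1)
    nlinarith

private lemma ode_uniq (α : ℝ) (hα : 1 ≤ α) (c₁ s₁ c₂ s₂ : ℝ → ℝ)
    (hc₁ : ∀ t, HasDerivAt c₁ (s₁ t) t)
    (hs₁ : ∀ t, HasDerivAt s₁ (-(|c₁ t| ^ (α - 1) * c₁ t)) t)
    (hc₂ : ∀ t, HasDerivAt c₂ (s₂ t) t)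
    (hs₂ : ∀ t, HasDerivAt s₂ (-(|c₂ t| ^ (α - 1) * c₂ t)) t)
    (t₀ : ℝ) (h1 : c₁ t₀ = c₂ t₀) (h2 : s₁ t₀ = s₂ t₀) :
    ∀ t, c₁ t = c₂ t ∧ s₁ t = s₂ t := by
  intro t
  set a : ℝ := -(|t| + |t₀| + 1) with ha
  set b : ℝ := |t| + |t₀| + 1 with hb
  have hta : a < t ∧ t < b := by
    constructor <;> [skip; skip] <;>
      · cases abs_le.1 (le_refl |t|) with
        | intro h3 h4 => simp only [ha, hb]; cases abs_nonneg t₀ |>.lt_or_eq <;> nlinarith [abs_nonneg t₀, neg_abs_le t, le_abs_self t]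
  have ht₀ : a < t₀ ∧ t₀ < b := by
    constructor <;> simp only [ha, hb] <;> nlinarith [abs_nonneg t, neg_abs_le t₀, le_abs_self t₀]
  set f : ℝ → ℝ × ℝ := fun u => (c₁ u, s₁ u) with hf
  set g : ℝ → ℝ × ℝ := fun u => (c₂ u, s₂ u) with hg
  have hfc : ContinuousOn f (Icc a b) := fun u _ =>
    (((hc₁ u).continuousAt.prodMk (hs₁ u).continuousAt)).continuousWithinAt
  have hgc : ContinuousOn g (Icc a b) := fun u _ =>
    (((hc₂ u).continuousAt.prodMk (hs₂ u).continuousAt)).continuousWithinAt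
  obtain ⟨R₁, hR₁⟩ := (isCompact_Icc (a := a) (b := b)).exists_bound_of_continuousOn hfc
  obtain ⟨R₂, hR₂⟩ := (isCompact_Icc (a := a) (b := b)).exists_bound_of_continuousOn hgc
  set R : ℝ := max R₁ R₂ with hRdef
  have hR : 0 ≤ R := le_trans (norm_nonneg (f a)) (le_trans (hR₁ a ⟨le_refl a, by linarith [hta.1, hta.2]⟩) (le_max_left _ _))
  set Kg : NNReal := ⟨α * R ^ (α - 1), by positivity⟩ with hKg
  set K : NNReal := max 1 Kg with hK
  set v : ℝ → ℝ × ℝ → ℝ × ℝ := fun _ p => (p.2, -(|p.1| ^ (α - 1) * p.1)) with hv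
  have hvlip : ∀ u : ℝ, LipschitzOnWith K (v u) (Metric.closedBall (0 : ℝ × ℝ) R) := by
    intro u
    apply LipschitzOnWith.of_dist_le_mul
    intro p hp q hq
    have hp1 : p.1 ∈ Icc (-R) R := by
      rw [Metric.mem_closedBall, dist_zero_right] at hp
      have := abs_le.1 (le_trans (norm_fst_le p) hp)
      exact ⟨this.1, this.2⟩
    have hq1 : q.1 ∈ Icc (-R) R := by
      rw [Metric.mem_closedBall, dist_zero_right] at hq
      have := abs_le.1 (le_trans (norm_fst_le q) hq)
      exact ⟨this.1, this.2⟩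
    have hg := (glip α hα R hR) hp1 hq1
    rw [edist_dist, edist_dist] at hg
    change ENNReal.ofReal _ ≤ (Kg : ENNReal) * ENNReal.ofReal _ at hg
    rw [← ENNReal.ofReal_coe_nnreal] at hg
    have hgd : dist (|p.1| ^ (α - 1) * p.1) (|q.1| ^ (α - 1) * q.1) ≤ Kg * dist p.1 q.1 := by
      have h0 : (0:ℝ) ≤ Kg * dist p.1 q.1 := by positivity
      rw [← ENNReal.ofReal_mul (by exact_mod_cast Kg.2)] at hg
      exact (ENNReal.ofReal_le_ofReal_iff h0).1 hg
    rw [Prod.dist_eq]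
    have hc1 : dist (v u p).1 (v u q).1 = dist p.2 q.2 := rfl
    have hc2 : dist (v u p).2 (v u q).2 = dist (|p.1| ^ (α - 1) * p.1) (|q.1| ^ (α - 1) * q.1) := by
      simp only [hv, dist_neg_neg]
    rw [hc1, hc2]
    have hd1 : dist p.2 q.2 ≤ dist p q := by rw [Prod.dist_eq]; exact le_max_right _ _
    have hd2 : dist p.1 q.1 ≤ dist p q := by rw [Prod.dist_eq]; exact le_max_left _ _
    have hK1 : (1:ℝ) ≤ (K:ℝ) := by
      rw [hK]; exact_mod_cast le_max_left 1 Kg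
    have hK2 : (Kg:ℝ) ≤ (K:ℝ) := by
      rw [hK]; exact_mod_cast le_max_right 1 Kg
    apply max_le
    · nlinarith [dist_nonneg (x := p) (y := q)]
    · calc dist (|p.1| ^ (α - 1) * p.1) (|q.1| ^ (α - 1) * q.1) ≤ Kg * dist p.1 q.1 := hgd
        _ ≤ K * dist p q := by nlinarith [dist_nonneg (x := p.1) (y := q.1), dist_nonneg (x := p) (y := q), Kg.2]
  have heqon := ODE_solution_unique_of_mem_Ioo (v := v)
    (s := fun _ => Metric.closedBall (0 : ℝ × ℝ) R) (K := K) (fun u _ => hvlip u)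
    (t₀ := t₀) (a := a) (b := b) ⟨ht₀.1, ht₀.2⟩
    (f := f) (g := g) ?_ ?_ ?_
  · have := heqon ⟨hta.1, hta.2⟩
    exact ⟨congrArg Prod.fst this, congrArg Prod.snd this⟩
  · intro u hu
    refine ⟨(hc₁ u).prodMk (hs₁ u), ?_⟩
    rw [Metric.mem_closedBall, dist_zero_right]
    exact le_trans (hR₁ u ⟨le_of_lt hu.1, le_of_lt hu.2⟩) (le_max_left _ _)
  · intro u hu
    refine ⟨(hc₂ u).prodMk (hs₂ u), ?_⟩
    rw [Metric.mem_closedBall, dist_zero_right]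
    exact le_trans (hR₂ u ⟨le_of_lt hu.1, le_of_lt hu.2⟩) (le_max_right _ _)
  · rw [hf, hg]
    simp only [h1, h2]

set_option maxHeartbeats 2000000 in
theorem stmt5 (α Λ γ : ℝ) (hα : 1 ≤ α) (hΛ : 0 < Λ) (hγ : 0 < γ)
    (hγdef : γ ^ ((α + 3)/2) * (2/(α + 3)) * Λ ^ (α + 1) = 1)
    (c s : ℝ → ℝ)
    (hc : ∀ t, HasDerivAt c (s t) t)
    (hs : ∀ t, HasDerivAt s (-(|c t| ^ (α - 1) * c t)) t)
    (hc0 : c 0 = Λ) (hs0 : s 0 = 0)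
    (hper : Function.Periodic c (2 * Real.pi))
    (hmin : ∀ T, 0 < T → Function.Periodic c T → 2 * Real.pi ≤ T)
    (η : AddCircle (2 * Real.pi) × ℝ → ℝ × ℝ)
    (hη : ∀ (θ r : ℝ), η ((θ : AddCircle (2 * Real.pi)), r) =
      (γ * r ^ (2/(α + 3)) * c θ, γ ^ ((α + 1)/2) * r ^ ((α + 1)/(α + 3)) * s θ)) :
    Set.BijOn η (Set.univ ×ˢ Set.Ioi 0) {p : ℝ × ℝ | p ≠ 0} ∧
    ContinuousOn η (Set.univ ×ˢ Set.Ioi 0) ∧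
    (∃ ηinv : ℝ × ℝ → AddCircle (2 * Real.pi) × ℝ,
      ContinuousOn ηinv {p : ℝ × ℝ | p ≠ 0} ∧
      Set.InvOn ηinv η (Set.univ ×ˢ Set.Ioi 0) {p : ℝ × ℝ | p ≠ 0}) ∧
    (∀ (θ r : ℝ), 0 < r →
      (γ * r ^ (2/(α + 3)) * s θ) *
        (γ ^ ((α + 1)/2) * ((α + 1)/(α + 3)) * r ^ ((α + 1)/(α + 3) - 1) * s θ) -
      (γ * (2/(α + 3)) * r ^ (2/(α + 3) - 1) * c θ) *
        (γ ^ ((α + 1)/2) * r ^ ((α + 1)/(α + 3)) * (-(|c θ| ^ (α - 1) * c θ))) = 1) := by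
  have hα1 : (0:ℝ) < α + 1 := by linarith
  have hα3 : (0:ℝ) < α + 3 := by linarith
  have hπ : (0:ℝ) < 2 * Real.pi := by positivity
  set E₀ : ℝ := 2/(α+1) * Λ ^ (α+1) with hE₀
  have hΛpow : (0:ℝ) < Λ ^ (α+1) := Real.rpow_pos_of_pos hΛ _
  have hE₀pos : 0 < E₀ := by rw [hE₀]; positivity
  have ccont : Continuous c := by
    rw [continuous_iff_continuousAt]; exact fun t => (hc t).continuousAt
  have scont : Continuous s := by
    rw [continuous_iff_continuousAt]; exact fun t => (hs t).continuousAt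
  -- energy conservation
  have energy : ∀ t, (s t)^2 + 2/(α+1) * |c t| ^ (α+1) = E₀ := by
    set F : ℝ → ℝ := fun t => (s t)^2 + 2/(α+1) * |c t| ^ (α+1) with hF
    have hF' : ∀ t, HasDerivAt F 0 t := by
      intro t
      have h1 : HasDerivAt (fun t => (s t)^2) (2 * s t * (-(|c t| ^ (α - 1) * c t))) t := by
        simpa using (hs t).fun_pow 2
      have h2 : HasDerivAt (fun t => |c t| ^ (α+1)) ((α + 1) * (|c t| ^ (α - 1) * c t) * s t) t :=
        (habs_pow_deriv α hα (c t)).comp t (hc t)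
      have h3 := h1.add ((h2.const_mul (2/(α+1))))
      refine h3.congr_deriv ?_
      field_simp
      ring
    have hconst : ∀ t, F t = F 0 := by
      intro t
      exact is_const_of_deriv_eq_zero (fun u => (hF' u).differentiableAt)
        (fun u => (hF' u).deriv) t 0
    intro t
    have := hconst t
    simp only [hF, hs0, hc0, abs_of_pos hΛ] at this
    rw [this, hE₀]
    ring
  -- |c| ≤ Λ
  have habsle : ∀ t, |c t| ≤ Λ := by
    intro t
    by_contra h
    push_neg at h
    have h2 : Λ ^ (α+1) < |c t| ^ (α+1) := Real.rpow_lt_rpow hΛ.le h (by linarith)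
    have h3 := energy t
    nlinarith [sq_nonneg (s t)]
  -- never both zero
  have hnz : ∀ t, ¬ (c t = 0 ∧ s t = 0) := by
    rintro t ⟨h1, h2⟩
    have h3 := energy t
    rw [h1, h2, abs_zero, Real.zero_rpow (by linarith : α + 1 ≠ 0)] at h3
    simp at h3
    nlinarith
  -- s periodic
  have hs_per : ∀ t, s (t + 2 * Real.pi) = s t := by
    intro t
    have h1 : HasDerivAt (fun u => c (u + 2 * Real.pi)) (s (t + 2 * Real.pi)) t := by
      exact HasDerivAt.comp_add_const t (2 * Real.pi) (hc (t + 2 * Real.pi))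
    have h2 : (fun u => c (u + 2 * Real.pi)) = c := funext fun u => hper u
    rw [h2] at h1
    exact h1.unique (hc t)
  -- even/odd symmetry
  have heo : ∀ t, c (-t) = c t ∧ s (-t) = -(s t) := by
    have key := ode_uniq α hα c s (fun t => c (-t)) (fun t => -(s (-t)))
      hc hs ?_ ?_ 0 (by simp) (by simp [hs0])
    · intro t
      obtain ⟨h1, h2⟩ := key t
      exact ⟨h1.symm, by linarith⟩
    · intro t
      have h1 : HasDerivAt (fun u => c (0 - u)) (-(s (0 - t))) t :=
        HasDerivAt.comp_const_sub 0 t (hc (0 - t))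
      simpa using h1
    · intro t
      have h1 : HasDerivAt (fun u => s (0 - u)) (-(-(|c (0 - t)| ^ (α - 1) * c (0 - t)))) t :=
        HasDerivAt.comp_const_sub 0 t (hs (0 - t))
      have h2 := h1.neg
      simp only [zero_sub] at h2 ⊢
      refine h2.congr_deriv ?_
      ring
  -- injectivity on the circle
  have hinj : ∀ θ₁ θ₂ : ℝ, c θ₁ = c θ₂ → s θ₁ = s θ₂ →
      ((θ₁ : AddCircle (2 * Real.pi)) = (θ₂ : AddCircle (2 * Real.pi))) := by
    intro θ₁ θ₂ hceq hseq
    set T : ℝ := θ₂ - θ₁ with hT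
    have hshift : ∀ t, c (t + T) = c t := by
      have key := ode_uniq α hα c s (fun u => c (u + T)) (fun u => s (u + T))
        hc hs (fun u => HasDerivAt.comp_add_const u T (hc (u + T)))
        (fun u => HasDerivAt.comp_add_const u T (hs (u + T))) θ₁
        (by simp only [hT]; rw [show θ₁ + (θ₂ - θ₁) = θ₂ by ring]; exact hceq)
        (by simp only [hT]; rw [show θ₁ + (θ₂ - θ₁) = θ₂ by ring]; exact hseq)
      intro t
      exact (key t).1.symm
    have hperT : Function.Periodic c T := fun t => hshift t
    -- reduce modulo 2π
    set n : ℤ := ⌊T / (2 * Real.pi)⌋ with hn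
    set T' : ℝ := T - n * (2 * Real.pi) with hT'
    have hT'mem : 0 ≤ T' ∧ T' < 2 * Real.pi := by
      constructor
      · have := Int.floor_le (T / (2 * Real.pi))
        rw [hT']
        have h2 : (n:ℝ) * (2 * Real.pi) ≤ T := by
          rw [hn]
          calc (⌊T / (2 * Real.pi)⌋ : ℝ) * (2 * Real.pi) ≤ T / (2 * Real.pi) * (2 * Real.pi) := by
                apply mul_le_mul_of_nonneg_right this (le_of_lt hπ)
            _ = T := by field_simp
        linarith
      · have := Int.lt_floor_add_one (T / (2 * Real.pi))
        rw [hT']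
        have h2 : T < (n:ℝ) * (2 * Real.pi) + 2 * Real.pi := by
          have h3 : T / (2 * Real.pi) * (2 * Real.pi) < ((n:ℝ) + 1) * (2 * Real.pi) := by
            apply mul_lt_mul_of_pos_right this hπ
          rw [div_mul_cancel₀ _ (ne_of_gt hπ)] at h3
          linarith [h3]
        linarith
    have hperT' : Function.Periodic c T' := by
      rw [hT']
      exact hperT.sub_period (hper.int_mul n)
    have hT'0 : T' = 0 := by
      by_contra h
      have h1 : 0 < T' := lt_of_le_of_ne hT'mem.1 (Ne.symm h)
      exact absurd (hmin T' h1 hperT') (not_le.2 hT'mem.2)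
    have hTmul : T = n * (2 * Real.pi) := by
      have := hT'0
      rw [hT'] at this
      linarith
    rw [QuotientAddGroup.eq]
    refine AddSubgroup.mem_zmultiples_iff.2 ⟨n, ?_⟩
    simp only [zsmul_eq_mul]
    rw [← hTmul, hT]
    ring
  -- surjectivity onto the energy curve
  have gpos : ∀ x : ℝ, 0 < x → 0 < |x| ^ (α - 1) * x := by
    intro x hx
    have h1 : 0 < |x| := abs_pos.2 (ne_of_gt hx)
    have := Real.rpow_pos_of_pos h1 (α - 1)
    positivity
  -- existence of a zero of c in (0, 2π]
  have hzero : ∃ t, 0 < t ∧ t ≤ 2 * Real.pi ∧ c t = 0 := by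
    by_contra h
    push_neg at h
    have hcpos : ∀ t ∈ Set.Icc 0 (2 * Real.pi), 0 < c t := by
      intro t ht
      rcases eq_or_lt_of_le ht.1 with h0 | h0
      · rw [← h0, hc0]; exact hΛ
      by_contra hle
      push_neg at hle
      rcases eq_or_lt_of_le hle with h1 | h1
      · exact h t h0 ht.2 h1
      · have hIVT : (0:ℝ) ∈ Set.Icc (c t) (c 0) := ⟨le_of_lt h1, by rw [hc0]; positivity⟩
        obtain ⟨u, hu, hcu⟩ := intermediate_value_Icc' (le_of_lt h0) (ccont.continuousOn) hIVT
        have hu0 : 0 < u := by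
          rcases eq_or_lt_of_le hu.1 with h2 | h2
          · exfalso; rw [← h2, hc0] at hcu; exact (ne_of_gt hΛ) hcu
          · exact h2
        exact h u hu0 (le_trans hu.2 ht.2) hcu
    have hs_anti : StrictAntiOn s (Set.Icc 0 (2 * Real.pi)) := by
      apply strictAntiOn_of_deriv_neg (convex_Icc _ _) scont.continuousOn
      intro x hx
      rw [interior_Icc] at hx
      rw [(hs x).deriv]
      have := gpos (c x) (hcpos x ⟨le_of_lt hx.1, le_of_lt hx.2⟩)
      linarith
    have hc_anti : StrictAntiOn c (Set.Icc 0 (2 * Real.pi)) := by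
      apply strictAntiOn_of_deriv_neg (convex_Icc _ _) ccont.continuousOn
      intro x hx
      rw [interior_Icc] at hx
      rw [(hc x).deriv]
      have := hs_anti ⟨le_refl 0, le_of_lt hπ⟩ ⟨le_of_lt hx.1, le_of_lt hx.2⟩ hx.1
      rw [hs0] at this
      exact this
    have h1 : c (2 * Real.pi) < c 0 :=
      hc_anti ⟨le_refl 0, le_of_lt hπ⟩ ⟨le_of_lt hπ, le_refl _⟩ hπ
    have h2 : c (2 * Real.pi) = c 0 := by
      have := hper 0
      simpa using this
    linarith
  -- first zero t₁
  obtain ⟨t₁, ht₁pos, ht₁le, hct₁, hcpos₁⟩ :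
      ∃ t₁, 0 < t₁ ∧ t₁ ≤ 2 * Real.pi ∧ c t₁ = 0 ∧ ∀ t, 0 ≤ t → t < t₁ → 0 < c t := by
    set S : Set ℝ := {t | t ∈ Set.Icc 0 (2 * Real.pi) ∧ c t = 0} with hS
    have hSne : S.Nonempty := by
      obtain ⟨t, h1, h2, h3⟩ := hzero
      exact ⟨t, ⟨⟨le_of_lt h1, h2⟩, h3⟩⟩
    have hSbdd : BddBelow S := ⟨0, fun t ht => ht.1.1⟩
    have hSclosed : IsClosed S := by
      have : S = Set.Icc 0 (2 * Real.pi) ∩ c ⁻¹' {0} := by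
        ext t; simp [hS, Set.mem_Icc]
      rw [this]
      exact isClosed_Icc.inter (isClosed_singleton.preimage ccont)
    set t₁ := sInf S with ht₁def
    have ht₁S : t₁ ∈ S := hSclosed.csInf_mem hSne hSbdd
    have ht₁pos : 0 < t₁ := by
      rcases eq_or_lt_of_le ht₁S.1.1 with h1 | h1
      · exfalso; have := ht₁S.2; rw [← h1, hc0] at this; exact (ne_of_gt hΛ) this
      · exact h1
    refine ⟨t₁, ht₁pos, ht₁S.1.2, ht₁S.2, ?_⟩
    intro t ht0 htlt
    by_contra hle
    push_neg at hle
    rcases eq_or_lt_of_le hle with h1 | h1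
    · have : t ∈ S := ⟨⟨ht0, le_trans (le_of_lt htlt) ht₁S.1.2⟩, h1⟩
      exact absurd (csInf_le hSbdd this) (not_le.2 htlt)
    · have ht0' : 0 < t := by
        rcases eq_or_lt_of_le ht0 with h2 | h2
        · exfalso; rw [← h2, hc0] at h1; linarith
        · exact h2
      have hIVT : (0:ℝ) ∈ Set.Icc (c t) (c 0) := ⟨le_of_lt h1, by rw [hc0]; positivity⟩
      obtain ⟨u, hu, hcu⟩ := intermediate_value_Icc' (le_of_lt ht0') (ccont.continuousOn) hIVT
      have : u ∈ S := ⟨⟨hu.1, le_trans hu.2 (le_trans (le_of_lt htlt) ht₁S.1.2)⟩, hcu⟩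
      have h3 := csInf_le hSbdd this
      have hu0 : 0 < u := by
        rcases eq_or_lt_of_le hu.1 with h2 | h2
        · exfalso; rw [← h2, hc0] at hcu; exact (ne_of_gt hΛ) hcu
        · exact h2
      linarith [le_trans h3 hu.2]
  -- reflection symmetry about t₁
  have hrefl : ∀ t, c (2 * t₁ - t) = -(c t) ∧ s (2 * t₁ - t) = s t := by
    have key := ode_uniq α hα c s (fun u => -(c (2 * t₁ - u))) (fun u => s (2 * t₁ - u))
      hc hs ?_ ?_ t₁ (by simp [show 2 * t₁ - t₁ = t₁ by ring, hct₁]) (by simp [show 2 * t₁ - t₁ = t₁ by ring])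
    · intro t
      obtain ⟨h1, h2⟩ := key t
      exact ⟨by linarith, h2.symm⟩
    · intro u
      have h1 : HasDerivAt (fun v => c (2 * t₁ - v)) (-(s (2 * t₁ - u))) u :=
        HasDerivAt.comp_const_sub (2 * t₁) u (hc (2 * t₁ - u))
      simpa using h1.fun_neg
    · intro u
      have h1 : HasDerivAt (fun v => s (2 * t₁ - v)) (-(-(|c (2 * t₁ - u)| ^ (α - 1) * c (2 * t₁ - u)))) u :=
        HasDerivAt.comp_const_sub (2 * t₁) u (hs (2 * t₁ - u))
      convert h1 using 1
      simp only [abs_neg, neg_neg]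
      ring
  -- s is negative on (0, 2t₁)
  have hs_neg₁ : ∀ t, 0 < t → t ≤ t₁ → s t < 0 := by
    have hanti : StrictAntiOn s (Set.Icc 0 t₁) := by
      apply strictAntiOn_of_deriv_neg (convex_Icc _ _) scont.continuousOn
      intro x hx
      rw [interior_Icc] at hx
      rw [(hs x).deriv]
      have := gpos (c x) (hcpos₁ x (le_of_lt hx.1) hx.2)
      linarith
    intro t ht0 ht1
    have := hanti ⟨le_refl 0, le_of_lt ht₁pos⟩ ⟨le_of_lt ht0, ht1⟩ ht0
    rw [hs0] at this
    exact this
  have hs_neg : ∀ t, 0 < t → t < 2 * t₁ → s t < 0 := by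
    intro t ht0 ht2
    rcases le_or_gt t t₁ with h1 | h1
    · exact hs_neg₁ t ht0 h1
    · have h2 := (hrefl t).2
      rw [← h2]
      exact hs_neg₁ (2 * t₁ - t) (by linarith) (by linarith)
  -- c is strictly decreasing on [0, 2t₁]
  have hc_anti : StrictAntiOn c (Set.Icc 0 (2 * t₁)) := by
    apply strictAntiOn_of_deriv_neg (convex_Icc _ _) ccont.continuousOn
    intro x hx
    rw [interior_Icc] at hx
    rw [(hc x).deriv]
    exact hs_neg x hx.1 hx.2
  have hc2t₁ : c (2 * t₁) = -Λ := by
    have := (hrefl 0).1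
    rw [show 2 * t₁ - 0 = 2 * t₁ by ring, hc0] at this
    exact this
  have hs2t₁ : s (2 * t₁) = 0 := by
    have := (hrefl 0).2
    rw [show 2 * t₁ - 0 = 2 * t₁ by ring, hs0] at this
    exact this
  -- surjectivity onto the energy curve
  have hsurj_pt : ∀ p q : ℝ, q^2 + 2/(α+1) * |p| ^ (α+1) = E₀ → ∃ t, c t = p ∧ s t = q := by
    intro p q hpq
    have hple : |p| ≤ Λ := by
      by_contra h
      push_neg at h
      have h2 : Λ ^ (α+1) < |p| ^ (α+1) := Real.rpow_lt_rpow hΛ.le h (by linarith)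
      rw [hE₀] at hpq
      nlinarith [sq_nonneg q]
    have hIVT : p ∈ Set.Icc (c (2 * t₁)) (c 0) := by
      rw [hc2t₁, hc0]
      exact ⟨neg_le_of_abs_le hple, le_of_abs_le hple⟩
    obtain ⟨t, ht, hct⟩ := intermediate_value_Icc' (by linarith : (0:ℝ) ≤ 2 * t₁)
      (ccont.continuousOn) hIVT
    have hstle : s t ≤ 0 := by
      rcases eq_or_lt_of_le ht.1 with h1 | h1
      · rw [← h1, hs0]
      rcases eq_or_lt_of_le ht.2 with h2 | h2
      · rw [h2, hs2t₁]
      · exact le_of_lt (hs_neg t h1 h2)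
    have hsq : (s t)^2 = q^2 := by
      have h1 := energy t
      rw [hct] at h1
      linarith
    have habs : |s t| = |q| := (sq_eq_sq_iff_abs_eq_abs _ _).1 hsq
    rcases le_or_gt q 0 with hq | hq
    · refine ⟨t, hct, ?_⟩
      rw [abs_of_nonpos hstle, abs_of_nonpos hq] at habs
      linarith
    · refine ⟨-t, ?_, ?_⟩
      · rw [(heo t).1, hct]
      · rw [(heo t).2]
        rw [abs_of_nonpos hstle, abs_of_pos hq] at habs
        linarith
  -- scaling identities
  have ha_pos : ∀ r : ℝ, 0 < r → 0 < γ * r ^ (2/(α+3)) := by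
    intro r hr
    have := Real.rpow_pos_of_pos hr (2/(α+3))
    positivity
  have hb_eq : ∀ r : ℝ, 0 < r →
      γ ^ ((α+1)/2) * r ^ ((α+1)/(α+3)) = (γ * r ^ (2/(α+3))) ^ ((α+1)/2) := by
    intro r hr
    rw [Real.mul_rpow hγ.le (Real.rpow_nonneg hr.le _), ← Real.rpow_mul hr.le]
    congr 1
    ring
  have hsq_rpow : ∀ a : ℝ, 0 < a → (a ^ ((α+1)/2))^2 = a ^ (α+1) := by
    intro a ha
    rw [← Real.rpow_natCast (a ^ ((α+1)/2)) 2, ← Real.rpow_mul ha.le]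
    norm_num
  set W : ℝ × ℝ → ℝ := fun p => p.2^2 + 2/(α+1) * |p.1| ^ (α+1) with hWdef
  have hWη : ∀ (θ r : ℝ), 0 < r →
      W (η ((θ : AddCircle (2 * Real.pi)), r)) = (γ * r ^ (2/(α+3))) ^ (α+1) * E₀ := by
    intro θ r hr
    rw [hη θ r]
    set a : ℝ := γ * r ^ (2/(α+3)) with ha
    have hap : 0 < a := ha_pos r hr
    simp only [hWdef]
    have h1 : (γ ^ ((α+1)/2) * r ^ ((α+1)/(α+3)) * s θ)^2 = a ^ (α+1) * (s θ)^2 := by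
      rw [mul_pow, hb_eq r hr, ← ha, hsq_rpow a hap]
    have h2 : |a * c θ| ^ (α+1) = a ^ (α+1) * |c θ| ^ (α+1) := by
      rw [abs_mul, abs_of_pos hap, Real.mul_rpow hap.le (abs_nonneg _)]
    rw [h1, h2]
    have := energy θ
    nlinarith [Real.rpow_pos_of_pos hap (α+1)]
  set R : ℝ × ℝ → ℝ := fun p => ((W p / E₀) ^ ((α+1)⁻¹) / γ) ^ ((α+3)/2) with hRdef
  have hRη : ∀ (θ r : ℝ), 0 < r → R (η ((θ : AddCircle (2 * Real.pi)), r)) = r := by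
    intro θ r hr
    simp only [hRdef]
    rw [hWη θ r hr]
    set a : ℝ := γ * r ^ (2/(α+3)) with ha
    have hap : 0 < a := ha_pos r hr
    rw [mul_div_assoc, div_self (ne_of_gt hE₀pos), mul_one,
      Real.rpow_rpow_inv hap.le (by linarith : α + 1 ≠ 0), ha,
      mul_comm γ _, mul_div_assoc, div_self (ne_of_gt hγ), mul_one,
      ← Real.rpow_mul hr.le]
    rw [show 2/(α+3) * ((α+3)/2) = 1 by field_simp, Real.rpow_one]
  -- the domain and target
  have hbpos : ∀ r : ℝ, 0 < r → 0 < γ ^ ((α+1)/2) * r ^ ((α+1)/(α+3)) := by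
    intro r hr
    have h1 : 0 < γ ^ ((α+1)/2) := Real.rpow_pos_of_pos hγ _
    have h2 : 0 < r ^ ((α+1)/(α+3)) := Real.rpow_pos_of_pos hr _
    positivity
  have hmaps : Set.MapsTo η (Set.univ ×ˢ Set.Ioi 0) {p : ℝ × ℝ | p ≠ 0} := by
    rintro ⟨Θ, r⟩ hP
    obtain ⟨θ, hθ⟩ := QuotientAddGroup.mk_surjective Θ
    have hr : 0 < r := hP.2
    rw [Set.mem_setOf_eq, ← hθ, hη θ r]
    intro h0
    rw [Prod.ext_iff] at h0
    obtain ⟨h1, h2⟩ := h0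
    simp only at h1 h2
    have hc0' : c θ = 0 := by
      have := ha_pos r hr
      exact (mul_eq_zero.1 h1).resolve_left (ne_of_gt this)
    have hs0' : s θ = 0 := by
      have := hbpos r hr
      exact (mul_eq_zero.1 h2).resolve_left (ne_of_gt this)
    exact hnz θ ⟨hc0', hs0'⟩
  have hinjOn : Set.InjOn η (Set.univ ×ˢ Set.Ioi 0) := by
    rintro ⟨Θp, rp⟩ hP ⟨Θq, rq⟩ hQ heq
    obtain ⟨θp, hθp⟩ := QuotientAddGroup.mk_surjective Θp
    obtain ⟨θq, hθq⟩ := QuotientAddGroup.mk_surjective Θq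
    have hrp : 0 < rp := hP.2
    have hrq : 0 < rq := hQ.2
    have hre : rp = rq := by
      have h1 : R (η (Θp, rp)) = rp := by rw [← hθp]; exact hRη θp rp hrp
      have h2 : R (η (Θq, rq)) = rq := by rw [← hθq]; exact hRη θq rq hrq
      rw [← h1, ← h2, heq]
    subst hre
    rw [← hθp, ← hθq, hη θp rp, hη θq rp, Prod.ext_iff] at heq
    obtain ⟨h1, h2⟩ := heq
    simp only at h1 h2
    have hceq : c θp = c θq := mul_left_cancel₀ (ne_of_gt (ha_pos rp hrp)) h1
    have hseq : s θp = s θq := mul_left_cancel₀ (ne_of_gt (hbpos rp hrp)) h2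
    rw [Prod.ext_iff]
    exact ⟨by rw [← hθp, ← hθq]; exact hinj θp θq hceq hseq, rfl⟩
  have hsurjOn : Set.SurjOn η (Set.univ ×ˢ Set.Ioi 0) {p : ℝ × ℝ | p ≠ 0} := by
    rintro ⟨x, v⟩ hp
    have hp' : (x, v) ≠ (0 : ℝ × ℝ) := hp
    have hWpos : 0 < W (x, v) := by
      simp only [hWdef]
      rcases eq_or_ne x 0 with hx | hx
      · have hv : v ≠ 0 := by
          intro h; exact hp' (by rw [hx, h]; rfl)
        have : 0 < v^2 := by positivity
        have h2 : 0 ≤ |x| ^ (α+1) := Real.rpow_nonneg (abs_nonneg _) _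
        nlinarith [div_nonneg (by norm_num : (0:ℝ) ≤ 2) hα1.le]
      · have h1 : 0 < |x| ^ (α+1) := Real.rpow_pos_of_pos (abs_pos.2 hx) _
        nlinarith [sq_nonneg v, div_pos (by norm_num : (0:ℝ) < 2) hα1]
    set aa : ℝ := (W (x, v) / E₀) ^ ((α+1)⁻¹) with haa
    have haapos : 0 < aa := Real.rpow_pos_of_pos (div_pos hWpos hE₀pos) _
    have haapow : aa ^ (α+1) = W (x, v) / E₀ :=
      Real.rpow_inv_rpow (div_nonneg hWpos.le hE₀pos.le) (by linarith : α + 1 ≠ 0)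
    set r : ℝ := (aa / γ) ^ ((α+3)/2) with hrdef
    have hrpos : 0 < r := Real.rpow_pos_of_pos (div_pos haapos hγ) _
    have key1 : γ * r ^ (2/(α+3)) = aa := by
      rw [hrdef, ← Real.rpow_mul (div_pos haapos hγ).le]
      rw [show (α+3)/2 * (2/(α+3)) = 1 by field_simp, Real.rpow_one]
      rw [mul_comm, div_mul_cancel₀ _ (ne_of_gt hγ)]
    have key2 : γ ^ ((α+1)/2) * r ^ ((α+1)/(α+3)) = aa ^ ((α+1)/2) := by
      rw [hb_eq r hrpos, key1]
    have haa2 : 0 < aa ^ ((α+1)/2) := Real.rpow_pos_of_pos haapos _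
    have hcurve : (v / aa ^ ((α+1)/2))^2 + 2/(α+1) * |x / aa| ^ (α+1) = E₀ := by
      have h1 : (v / aa ^ ((α+1)/2))^2 = v^2 / aa ^ (α+1) := by
        rw [div_pow, hsq_rpow aa haapos]
      have h2 : |x / aa| ^ (α+1) = |x| ^ (α+1) / aa ^ (α+1) := by
        rw [abs_div, abs_of_pos haapos, Real.div_rpow (abs_nonneg _) haapos.le]
      have hWne : W (x, v) ≠ 0 := ne_of_gt hWpos
      have hWval : W (x, v) = v^2 + 2/(α+1) * |x| ^ (α+1) := rfl
      calc (v / aa ^ ((α+1)/2))^2 + 2/(α+1) * |x / aa| ^ (α+1)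
          = W (x, v) / aa ^ (α+1) := by rw [h1, h2, hWval]; ring
        _ = W (x, v) / (W (x, v) / E₀) := by rw [haapow]
        _ = E₀ := by
            rw [div_div_eq_mul_div, mul_comm, mul_div_assoc, div_self hWne, mul_one]
    obtain ⟨t, hct, hst⟩ := hsurj_pt (x / aa) (v / aa ^ ((α+1)/2)) hcurve
    refine ⟨((t : AddCircle (2 * Real.pi)), r), ⟨Set.mem_univ _, hrpos⟩, ?_⟩
    rw [hη t r, hct, hst, key1, key2]
    rw [Prod.ext_iff]
    constructor
    · simp only
      rw [mul_div_cancel₀ _ (ne_of_gt haapos)]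
    · simp only
      rw [mul_div_cancel₀ _ (ne_of_gt haa2)]
  have hm : IsOpenQuotientMap
      (Prod.map (QuotientAddGroup.mk : ℝ → AddCircle (2 * Real.pi)) (id : ℝ → ℝ)) :=
    QuotientAddGroup.isOpenQuotientMap_mk.prodMap IsOpenQuotientMap.id
  have hcompF : (η ∘ (Prod.map (QuotientAddGroup.mk : ℝ → AddCircle (2 * Real.pi)) (id : ℝ → ℝ)))
      = fun q : ℝ × ℝ =>
      (γ * q.2 ^ (2/(α+3)) * c q.1, γ ^ ((α+1)/2) * q.2 ^ ((α+1)/(α+3)) * s q.1) :=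
    funext fun q => hη q.1 q.2
  have hFca : ∀ q : ℝ × ℝ, 0 < q.2 → ContinuousAt (fun q : ℝ × ℝ =>
      (γ * q.2 ^ (2/(α+3)) * c q.1, γ ^ ((α+1)/2) * q.2 ^ ((α+1)/(α+3)) * s q.1)) q := by
    intro q hq
    have hrp1 : ContinuousAt (fun q : ℝ × ℝ => q.2 ^ (2/(α+3))) q :=
      (Real.continuousAt_rpow_const q.2 _ (Or.inl (ne_of_gt hq))).comp continuousAt_snd
    have hrp2 : ContinuousAt (fun q : ℝ × ℝ => q.2 ^ ((α+1)/(α+3))) q :=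
      (Real.continuousAt_rpow_const q.2 _ (Or.inl (ne_of_gt hq))).comp continuousAt_snd
    have hc1 : ContinuousAt (fun q : ℝ × ℝ => c q.1) q :=
      ccont.continuousAt.comp continuousAt_fst
    have hs1 : ContinuousAt (fun q : ℝ × ℝ => s q.1) q :=
      scont.continuousAt.comp continuousAt_fst
    exact ContinuousAt.prodMk
      (((continuousAt_const.mul hrp1).mul hc1))
      (((continuousAt_const.mul hrp2).mul hs1))
  have hηca : ∀ (θ r : ℝ), 0 < r → ContinuousAt η ((θ : AddCircle (2 * Real.pi)), r) := by
    intro θ r hr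
    have h1 : ContinuousAt (η ∘ (Prod.map (QuotientAddGroup.mk : ℝ → AddCircle (2 * Real.pi))
        (id : ℝ → ℝ))) (θ, r) := by
      rw [hcompF]
      exact hFca (θ, r) hr
    exact (hm.continuousAt_comp_iff).1 h1
  have hηcont : ContinuousOn η (Set.univ ×ˢ Set.Ioi 0) := by
    rintro ⟨Θ, r⟩ hP
    obtain ⟨θ, hθ⟩ := QuotientAddGroup.mk_surjective Θ
    have hr : 0 < r := hP.2
    apply ContinuousAt.continuousWithinAt
    rw [← hθ]
    exact hηca θ r hr
  have hinvex : ∃ ηinv : ℝ × ℝ → AddCircle (2 * Real.pi) × ℝ,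
      ContinuousOn ηinv {p : ℝ × ℝ | p ≠ 0} ∧
      Set.InvOn ηinv η (Set.univ ×ˢ Set.Ioi 0) {p : ℝ × ℝ | p ≠ 0} := by
    classical
    haveI : Fact (0 < 2 * Real.pi) := ⟨hπ⟩
    have hbij : Set.BijOn η (Set.univ ×ˢ Set.Ioi 0) {p : ℝ × ℝ | p ≠ 0} :=
      ⟨hmaps, hinjOn, hsurjOn⟩
    set ηinv : ℝ × ℝ → AddCircle (2 * Real.pi) × ℝ :=
      Function.invFunOn η (Set.univ ×ˢ Set.Ioi 0) with hηinvdef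
    have hInv : Set.InvOn ηinv η (Set.univ ×ˢ Set.Ioi 0) {p : ℝ × ℝ | p ≠ 0} :=
      hbij.invOn_invFunOn
    -- general positivity of W away from 0
    have hWposgen : ∀ p : ℝ × ℝ, p ≠ 0 → 0 < W p := by
      intro p hp
      simp only [hWdef]
      rcases eq_or_ne p.1 0 with hx | hx
      · have hv : p.2 ≠ 0 := by
          intro h
          exact hp (Prod.ext hx h)
        have h1 : 0 < p.2^2 := by positivity
        have h2 : 0 ≤ |p.1| ^ (α+1) := Real.rpow_nonneg (abs_nonneg _) _
        have h3 : (0:ℝ) ≤ 2/(α+1) := by positivity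
        nlinarith
      · have h1 : 0 < |p.1| ^ (α+1) := Real.rpow_pos_of_pos (abs_pos.2 hx) _
        have h3 : (0:ℝ) < 2/(α+1) := by positivity
        nlinarith [sq_nonneg p.2]
    -- continuity of R on the punctured plane
    have hWcont : Continuous W := by
      have h1 : Continuous fun p : ℝ × ℝ => |p.1| := continuous_abs.comp continuous_fst
      have h2 : Continuous fun p : ℝ × ℝ => |p.1| ^ (α+1) := by
        rw [continuous_iff_continuousAt]
        intro p
        exact (Real.continuousAt_rpow_const _ _ (Or.inr (by linarith))).comp h1.continuousAt
      exact (continuous_snd.pow 2).add (continuous_const.mul h2)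
    have hRcont : ContinuousOn R {p : ℝ × ℝ | p ≠ 0} := by
      intro p hp
      have hWp : 0 < W p := hWposgen p hp
      apply ContinuousAt.continuousWithinAt
      have h1 : ContinuousAt (fun p => W p / E₀) p := (hWcont.continuousAt).div_const _
      have h2 : ContinuousAt (fun p => (W p / E₀) ^ ((α+1)⁻¹)) p :=
        h1.rpow_const (Or.inl (ne_of_gt (div_pos hWp hE₀pos)))
      have h3 : ContinuousAt (fun p => (W p / E₀) ^ ((α+1)⁻¹) / γ) p := h2.div_const _
      have h4 : ContinuousAt (fun p => ((W p / E₀) ^ ((α+1)⁻¹) / γ) ^ ((α+3)/2)) p :=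
        h3.rpow_const (Or.inl (ne_of_gt (div_pos (Real.rpow_pos_of_pos (div_pos hWp hE₀pos) _) hγ)))
      exact h4
    refine ⟨ηinv, ?_, hInv⟩
    -- continuity of the inverse
    intro p₀ hp₀
    apply ContinuousAt.continuousWithinAt
    obtain ⟨Q₀, hQ₀D, hQ₀⟩ := hsurjOn hp₀
    obtain ⟨θ₀, hθ₀⟩ := QuotientAddGroup.mk_surjective Q₀.1
    have hr₀pos : 0 < Q₀.2 := hQ₀D.2
    set r₀ : ℝ := Q₀.2 with hr₀def
    have hRp₀ : R p₀ = r₀ := by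
      rw [← hQ₀, show Q₀ = (Q₀.1, Q₀.2) from rfl, ← hθ₀]
      exact hRη θ₀ r₀ hr₀pos
    set K : Set (AddCircle (2 * Real.pi) × ℝ) := Set.univ ×ˢ Set.Icc (r₀/2) (2*r₀) with hK
    have hKD : K ⊆ Set.univ ×ˢ Set.Ioi 0 := by
      rintro ⟨Θ, r⟩ hk
      exact ⟨Set.mem_univ _, lt_of_lt_of_le (by linarith : (0:ℝ) < r₀/2) hk.2.1⟩
    have hKcomp : IsCompact K := isCompact_univ.prod isCompact_Icc
    haveI hKcs : CompactSpace K := isCompact_iff_compactSpace.1 hKcomp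
    set fK : K → ℝ × ℝ := fun k => η k.1 with hfK
    have hfKcont : Continuous fK := ContinuousOn.restrict (hηcont.mono hKD)
    have hfKinj : Function.Injective fK := by
      rintro k₁ k₂ h
      exact Subtype.ext (hinjOn (hKD k₁.2) (hKD k₂.2) h)
    set e : K ≃ Set.range fK := Equiv.ofInjective fK hfKinj with he
    have hecont : Continuous (fun k => (e k : Set.range fK)) :=
      hfKcont.subtype_mk _
    have hesymm : Continuous (e.symm : Set.range fK → K) :=
      hecont.continuous_symm_of_equiv_compact_to_t2
    set N : Set (ℝ × ℝ) := {p : ℝ × ℝ | p ≠ 0} ∩ R ⁻¹' (Set.Ioo (r₀/2) (2*r₀)) with hN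
    have hNopen : IsOpen N :=
      hRcont.isOpen_inter_preimage (isOpen_compl_singleton) isOpen_Ioo
    have hp₀N : p₀ ∈ N := by
      refine ⟨hp₀, ?_⟩
      rw [Set.mem_preimage, hRp₀]
      exact ⟨by linarith, by linarith⟩
    have hNrange : N ⊆ Set.range fK := by
      intro q hq
      obtain ⟨Q, hQD, hQq⟩ := hsurjOn hq.1
      obtain ⟨θ, hθ⟩ := QuotientAddGroup.mk_surjective Q.1
      have hrQ : 0 < Q.2 := hQD.2
      have hRq : R q = Q.2 := by
        rw [← hQq, show Q = (Q.1, Q.2) from rfl, ← hθ]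
        exact hRη θ Q.2 hrQ
      have hQK : Q ∈ K := by
        refine ⟨Set.mem_univ _, ?_⟩
        have h1 := hq.2
        rw [Set.mem_preimage, hRq] at h1
        exact ⟨le_of_lt h1.1, le_of_lt h1.2⟩
      rw [show (Set.range fK) = η '' K by rw [Set.image_eq_range]]
      exact ⟨Q, hQK, hQq⟩
    have hcontN : ContinuousOn ηinv N := by
      rw [continuousOn_iff_continuous_restrict]
      have hrestr : N.restrict ηinv = fun q : N =>
          ((e.symm ⟨q.1, hNrange q.2⟩ : K) : AddCircle (2 * Real.pi) × ℝ) := by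
        funext q
        have hk : fK (e.symm ⟨q.1, hNrange q.2⟩) = q.1 := by
          have := e.apply_symm_apply ⟨q.1, hNrange q.2⟩
          calc fK (e.symm ⟨q.1, hNrange q.2⟩)
              = ((e (e.symm ⟨q.1, hNrange q.2⟩)) : ℝ × ℝ) := rfl
            _ = ((⟨q.1, hNrange q.2⟩ : Set.range fK) : ℝ × ℝ) := by rw [this]
        have hq0 : (q : ℝ × ℝ) ∈ {p : ℝ × ℝ | p ≠ 0} := q.2.1
        have hmem : ηinv q.1 ∈ Set.univ ×ˢ Set.Ioi 0 := by
          obtain ⟨a, ha, hfa⟩ := hsurjOn hq0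
          exact Function.invFunOn_mem ⟨a, ha, hfa⟩
        have hval : η (ηinv q.1) = q.1 := hInv.2 hq0
        have hkD : ((e.symm ⟨q.1, hNrange q.2⟩ : K) : AddCircle (2 * Real.pi) × ℝ)
            ∈ Set.univ ×ˢ Set.Ioi 0 := hKD (e.symm ⟨q.1, hNrange q.2⟩).2
        exact hinjOn hmem hkD (by rw [hval]; exact hk.symm)
      change Continuous (N.restrict ηinv)
      rw [hrestr]
      exact continuous_subtype_val.comp (hesymm.comp (Continuous.subtype_mk continuous_subtype_val _))
    exact hcontN.continuousAt (hNopen.mem_nhds hp₀N)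
  refine ⟨⟨hmaps, hinjOn, hsurjOn⟩, hηcont, hinvex, ?_⟩
  -- the symplectic identity
  intro θ r hr
  have e1 : r ^ (2/(α+3)) * r ^ ((α+1)/(α+3) - 1) = 1 := by
    rw [← Real.rpow_add hr, show 2/(α+3) + ((α+1)/(α+3) - 1) = 0 by field_simp; ring,
      Real.rpow_zero]
  have e2 : r ^ (2/(α+3) - 1) * r ^ ((α+1)/(α+3)) = 1 := by
    rw [← Real.rpow_add hr, show (2/(α+3) - 1) + (α+1)/(α+3) = 0 by field_simp; ring,
      Real.rpow_zero]
  have e3 : γ * γ ^ ((α+1)/2) = γ ^ ((α+3)/2) := by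
    have h := Real.rpow_add hγ 1 ((α+1)/2)
    rw [Real.rpow_one] at h
    rw [← h, show (1 + (α+1)/2) = (α+3)/2 by ring]
  have e4 : c θ * (|c θ| ^ (α-1) * c θ) = |c θ| ^ (α+1) := habs_pow_succ α hα (c θ)
  have hEθ := energy θ
  have key : (α+1) * (s θ)^2 + 2 * |c θ| ^ (α+1) = 2 * Λ ^ (α+1) := by
    rw [hE₀] at hEθ
    field_simp at hEθ
    linarith
  have step1 : (γ * r ^ (2/(α + 3)) * s θ) *
        (γ ^ ((α + 1)/2) * ((α + 1)/(α + 3)) * r ^ ((α + 1)/(α + 3) - 1) * s θ) -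
      (γ * (2/(α + 3)) * r ^ (2/(α + 3) - 1) * c θ) *
        (γ ^ ((α + 1)/2) * r ^ ((α + 1)/(α + 3)) * (-(|c θ| ^ (α - 1) * c θ))) =
      γ ^ ((α+3)/2) * ((α+1)/(α+3) * (s θ)^2 + 2/(α+3) * |c θ| ^ (α+1)) := by
    linear_combination (γ ^ ((α+1)/2) * γ * ((α+1)/(α+3)) * (s θ)^2) * e1 +
      (γ ^ ((α+1)/2) * γ * (2/(α+3)) * (c θ * (|c θ| ^ (α-1) * c θ))) * e2 +
      (((α+1)/(α+3)) * (s θ)^2 + (2/(α+3)) * (c θ * (|c θ| ^ (α-1) * c θ))) * e3 +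
      (γ ^ ((α+3)/2) * (2/(α+3))) * e4
  rw [step1]
  have step2 : (α+1)/(α+3) * (s θ)^2 + 2/(α+3) * |c θ| ^ (α+1) = 2/(α+3) * Λ ^ (α+1) := by
    linear_combination (1/(α+3)) * key
  rw [step2, ← mul_assoc]
  exact hγdef
end

section
/- Let α ≥ 3 and suppose H : ℝ × [I_*, ∞) × ℝ → ℝ solves κ₁ H^{2(α+1)/(α+3)} − γ H^{2/(α+3)} p(φ) c(τ) = I with p, c bounded. Then there exist constants α₀, β₀ > 0 and I_* > 0 such that α₀ I^{(α+3)/(2(α+1))} ≤ H(φ, I; τ) ≤ β₀ I^{(α+3)/(2(α+1))} for all I ≥ I_* and all φ, τ ∈ ℝ. -/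
theorem stmt8 (α γ κ₁ Mc Mp : ℝ) (hα : 3 ≤ α) (hγ : 0 < γ) (hκ₁ : 0 < κ₁)
    (c p : ℝ → ℝ) (hc : ∀ t, |c t| ≤ Mc) (hp : ∀ t, |p t| ≤ Mp) :
    ∃ Istar > 0, ∃ α₀ > 0, ∃ β₀ > 0, ∀ (φ τ I H : ℝ), Istar ≤ I → 0 < H →
      κ₁ * H ^ (2 * (α + 1)/(α + 3)) - γ * H ^ (2/(α + 3)) * p φ * c τ = I →
      α₀ * I ^ ((α + 3)/(2 * (α + 1))) ≤ H ∧ H ≤ β₀ * I ^ ((α + 3)/(2 * (α + 1))) := by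
  have hMp : 0 ≤ Mp := le_trans (abs_nonneg _) (hp 0)
  have hMc : 0 ≤ Mc := le_trans (abs_nonneg _) (hc 0)
  have hα3 : (0:ℝ) < α + 3 := by linarith
  set a : ℝ := 2 * (α + 1) / (α + 3) with ha_def
  set b : ℝ := 2 / (α + 3) with hb_def
  have haPos : 0 < a := div_pos (by linarith) hα3
  have hbPos : 0 < b := div_pos (by norm_num) hα3
  have hba : b < a := by
    rw [ha_def, hb_def, div_lt_div_iff₀ hα3 hα3]; nlinarith
  have hePos : 0 < a - b := by linarith
  have hexp : (α + 3)/(2 * (α + 1)) = 1/a := by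
    rw [ha_def, one_div_div]
  set C : ℝ := γ * (Mp * Mc) with hC_def
  have hC0 : 0 ≤ C := by positivity
  set K : ℝ := κ₁ + C with hK_def
  have hK0 : 0 < K := by positivity
  set H₀ : ℝ := max 1 ((2 * C / κ₁) ^ (a - b)⁻¹) with hH0_def
  have hH01 : (1:ℝ) ≤ H₀ := le_max_left _ _
  refine ⟨K + 1, by positivity, (K ^ (1/a))⁻¹,
    inv_pos.mpr (Real.rpow_pos_of_pos hK0 _),
    max H₀ ((2/κ₁) ^ (1/a)), lt_of_lt_of_le one_pos (le_trans hH01 (le_max_left _ _)),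
    ?_⟩
  intro φ τ I H hI hH heq
  rw [hexp]
  have hIpos : 0 < I := lt_of_lt_of_le (by positivity) hI
  have hI1 : (1:ℝ) ≤ I := le_trans (by linarith) hI
  have hHa : 0 < H ^ a := Real.rpow_pos_of_pos hH a
  have hHb : 0 < H ^ b := Real.rpow_pos_of_pos hH b
  -- perturbation bound
  have hpert : |γ * H ^ b * p φ * c τ| ≤ C * H ^ b := by
    calc |γ * H ^ b * p φ * c τ| = γ * H ^ b * |p φ| * |c τ| := by
          rw [abs_mul, abs_mul, abs_of_nonneg (by positivity)]
      _ ≤ γ * H ^ b * Mp * Mc := by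
          apply mul_le_mul (mul_le_mul_of_nonneg_left (hp φ) (by positivity)) (hc τ)
            (abs_nonneg _) (by positivity)
      _ = C * H ^ b := by rw [hC_def]; ring
  have hpert1 := neg_le_of_abs_le hpert
  have hpert2 := le_of_abs_le hpert
  have hup : I ≤ κ₁ * H ^ a + C * H ^ b := by linarith [heq]
  have hlow : κ₁ * H ^ a - C * H ^ b ≤ I := by linarith [heq]
  -- rpow inversion helper
  have hHinv : (H ^ a) ^ (1/a) = H := by
    rw [← Real.rpow_mul hH.le, mul_one_div_cancel haPos.ne', Real.rpow_one]
  constructor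
  · -- lower bound
    have hH1 : (1:ℝ) ≤ H := by
      by_contra hcon
      push_neg at hcon
      have h1 : H ^ a ≤ 1 := Real.rpow_le_one hH.le hcon.le haPos.le
      have h2 : H ^ b ≤ 1 := Real.rpow_le_one hH.le hcon.le hbPos.le
      nlinarith
    have hba' : H ^ b ≤ H ^ a := Real.rpow_le_rpow_of_exponent_le hH1 hba.le
    have hIK : I ≤ K * H ^ a := by
      rw [hK_def]; nlinarith
    have : I ^ (1/a) ≤ K ^ (1/a) * H := by
      calc I ^ (1/a) ≤ (K * H ^ a) ^ (1/a) :=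
            Real.rpow_le_rpow hIpos.le hIK (by positivity)
        _ = K ^ (1/a) * (H ^ a) ^ (1/a) := Real.mul_rpow hK0.le hHa.le
        _ = K ^ (1/a) * H := by rw [hHinv]
    calc (K ^ (1/a))⁻¹ * I ^ (1/a) ≤ (K ^ (1/a))⁻¹ * (K ^ (1/a) * H) := by
          apply mul_le_mul_of_nonneg_left this (by positivity)
      _ = H := by
          rw [← mul_assoc, inv_mul_cancel₀ (Real.rpow_pos_of_pos hK0 _).ne', one_mul]
  · -- upper bound
    have hI1a : (1:ℝ) ≤ I ^ (1/a) := by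
      calc (1:ℝ) = 1 ^ (1/a) := (Real.one_rpow _).symm
        _ ≤ I ^ (1/a) := Real.rpow_le_rpow zero_le_one hI1 (by positivity)
    rcases le_or_gt H H₀ with hcase | hcase
    · calc H ≤ H₀ := hcase
        _ ≤ max H₀ ((2/κ₁) ^ (1/a)) := le_max_left _ _
        _ = max H₀ ((2/κ₁) ^ (1/a)) * 1 := (mul_one _).symm
        _ ≤ max H₀ ((2/κ₁) ^ (1/a)) * I ^ (1/a) := by
            apply mul_le_mul_of_nonneg_left hI1a
            exact le_trans zero_le_one (le_trans hH01 (le_max_left _ _))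
    · have hH1 : (1:ℝ) ≤ H := le_trans hH01 hcase.le
      have hHe : 2 * C / κ₁ ≤ H ^ (a - b) := by
        have h1 : (2 * C / κ₁) ^ (a - b)⁻¹ ≤ H :=
          le_trans (le_max_right _ _) hcase.le
        calc 2 * C / κ₁ = ((2 * C / κ₁) ^ (a - b)⁻¹) ^ (a - b) := by
              rw [← Real.rpow_mul (by positivity : (0:ℝ) ≤ 2 * C / κ₁),
                inv_mul_cancel₀ hePos.ne', Real.rpow_one]
          _ ≤ H ^ (a - b) := Real.rpow_le_rpow (by positivity) h1 hePos.le
      have hCb : C * H ^ b ≤ κ₁ / 2 * H ^ a := by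
        rw [div_le_iff₀ hκ₁] at hHe
        have h3 : H ^ (a - b) * H ^ b = H ^ a := by
          rw [← Real.rpow_add hH, sub_add_cancel]
        have h2 : C ≤ κ₁ / 2 * H ^ (a - b) := by linarith
        calc C * H ^ b ≤ κ₁ / 2 * H ^ (a - b) * H ^ b :=
              mul_le_mul_of_nonneg_right h2 hHb.le
          _ = κ₁ / 2 * H ^ a := by rw [mul_assoc, h3]
      have hH2 : H ^ a ≤ 2 / κ₁ * I := by
        rw [div_mul_eq_mul_div, le_div_iff₀ hκ₁]
        linarith [hCb, hlow]
      calc H = (H ^ a) ^ (1/a) := hHinv.symm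
        _ ≤ (2/κ₁ * I) ^ (1/a) := Real.rpow_le_rpow hHa.le hH2 (by positivity)
        _ = (2/κ₁) ^ (1/a) * I ^ (1/a) := Real.mul_rpow (by positivity) hIpos.le
        _ ≤ max H₀ ((2/κ₁) ^ (1/a)) * I ^ (1/a) := by
            apply mul_le_mul_of_nonneg_right (le_max_right _ _) (by positivity)
end

section
/- Let g ∈ C¹(𝕋^N) with ‖∂_ω g‖_∞ ≤ κ < 1, where ∂_ω = Σᵢ ωᵢ ∂/∂θᵢ and ω has positive rationally independent entries. Then for each Ω̄ ∈ 𝕋^N the fixed-point equation q = g(Ω̄ + ι(q)) has a unique solution q = 𝐪(Ω̄) ∈ ℝ with |𝐪(Ω̄)| ≤ ‖g‖_∞/(1−κ), and 𝐪 : 𝕋^N → ℝ is continuous. Consequently, the map φ ↦ φ − g_Θ̄(φ) (with g_Θ̄(φ) = g(Θ̄ + ι(φ))) is a bijection of ℝ whose inverse has the form ψ ↦ ψ + 𝐪(Θ̄ + ι(ψ)). -/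
theorem stmt16 (N : ℕ) (ω : Fin N → ℝ) (hω : ∀ i, 0 < ω i)
    (hind : ∀ k : Fin N → ℤ, ∑ i, (k i : ℝ) * ω i = 0 → k = 0)
    (ι : ℝ → Fin N → AddCircle (1:ℝ))
    (hι : ∀ t i, ι t i = ((t * ω i : ℝ) : AddCircle (1:ℝ)))
    (g gω : (Fin N → AddCircle (1:ℝ)) → ℝ) (κ C : ℝ) (hκ0 : 0 ≤ κ) (hκ : κ < 1)
    (hgcont : Continuous g) (hgωcont : Continuous gω)
    (hderiv : ∀ Ω, HasDerivAt (fun t => g (Ω + ι t)) (gω Ω) 0)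
    (hgωbdd : ∀ Ω, |gω Ω| ≤ κ) (hgbdd : ∀ Ω, |g Ω| ≤ C) :
    ∃ Q : (Fin N → AddCircle (1:ℝ)) → ℝ, Continuous Q ∧
      (∀ Ω, Q Ω = g (Ω + ι (Q Ω)) ∧ |Q Ω| ≤ C / (1 - κ) ∧
        ∀ q', q' = g (Ω + ι q') → q' = Q Ω) ∧
      (∀ Θ : Fin N → AddCircle (1:ℝ),
        Function.Bijective (fun φ : ℝ => φ - g (Θ + ι φ)) ∧
        ∀ ψ : ℝ, (ψ + Q (Θ + ι ψ)) - g (Θ + ι (ψ + Q (Θ + ι ψ))) = ψ) := by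
  have hone : (0:ℝ) < 1 - κ := by linarith
  -- additivity of ι
  have hadd : ∀ s t : ℝ, ι (s + t) = ι s + ι t := by
    intro s t
    funext i
    show ι (s + t) i = ι s i + ι t i
    rw [hι, hι, hι, add_mul, AddCircle.coe_add]
  -- derivative at every point
  have hderiv' : ∀ (Ω) (t₀ : ℝ),
      HasDerivAt (fun t => g (Ω + ι t)) (gω (Ω + ι t₀)) t₀ := by
    intro Ω t₀
    have h1 : HasDerivAt ((fun s => g (Ω + ι t₀ + ι s)) ∘ (fun x : ℝ => x - t₀))
        (gω (Ω + ι t₀) * 1) t₀ :=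
      HasDerivAt.comp t₀ (by simpa using hderiv (Ω + ι t₀))
        ((hasDerivAt_id t₀).sub_const t₀)
    simp only [mul_one] at h1
    have heq : (fun t => g (Ω + ι t₀ + ι (t - t₀))) = fun t => g (Ω + ι t) := by
      funext t
      congr 1
      rw [add_assoc, ← hadd]
      congr 2
      ring
    rw [Function.comp_def] at h1
    simpa [heq] using h1
  set κ' : NNReal := ⟨κ, hκ0⟩ with hκ'def
  -- Lipschitz estimate
  have hlip : ∀ Ω, LipschitzWith κ' (fun t => g (Ω + ι t)) := by
    intro Ω
    refine lipschitzOnWith_univ.1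
      (convex_univ.lipschitzOnWith_of_nnnorm_hasDerivWithin_le
        (f' := fun t => gω (Ω + ι t))
        (fun x _ => (hderiv' Ω x).hasDerivWithinAt) (fun x _ => ?_))
    rw [← NNReal.coe_le_coe]
    exact (by simpa [Real.norm_eq_abs] using hgωbdd (Ω + ι x) : ‖gω (Ω + ι x)‖ ≤ κ)
  have hlip' : ∀ Ω s t, |g (Ω + ι s) - g (Ω + ι t)| ≤ κ * |s - t| := by
    intro Ω s t
    have := (hlip Ω).dist_le_mul s t
    rw [Real.dist_eq, Real.dist_eq] at this; exact this
  have hcontr : ∀ Ω, ContractingWith κ' (fun t => g (Ω + ι t)) := by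
    intro Ω
    refine ⟨?_, hlip Ω⟩
    exact_mod_cast hκ
  set Q : (Fin N → AddCircle (1:ℝ)) → ℝ :=
    fun Ω => ContractingWith.fixedPoint (fun t => g (Ω + ι t)) (hcontr Ω) with hQdef
  have hfix : ∀ Ω, Q Ω = g (Ω + ι (Q Ω)) :=
    fun Ω => ((hcontr Ω).fixedPoint_isFixedPt).symm
  have huniq : ∀ Ω q', q' = g (Ω + ι q') → q' = Q Ω :=
    fun Ω q' h => (hcontr Ω).fixedPoint_unique h.symm
  have hbound : ∀ Ω, |Q Ω| ≤ C / (1 - κ) := by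
    intro Ω
    have h1 : |Q Ω| ≤ C := by rw [hfix Ω]; exact hgbdd _
    have hC0 : 0 ≤ C := le_trans (abs_nonneg _) (hgbdd Ω)
    have h2 : C ≤ C / (1 - κ) := by
      rw [le_div_iff₀ hone]
      nlinarith
    linarith
  -- key continuity estimate
  have key : ∀ Ω Ω', |Q Ω - Q Ω'| ≤
      (1 - κ)⁻¹ * |g (Ω + ι (Q Ω')) - g (Ω' + ι (Q Ω'))| := by
    intro Ω Ω'
    have h1 : |g (Ω + ι (Q Ω)) - g (Ω + ι (Q Ω'))| ≤ κ * |Q Ω - Q Ω'| :=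
      hlip' Ω (Q Ω) (Q Ω')
    have h2 : Q Ω - Q Ω' = (g (Ω + ι (Q Ω)) - g (Ω + ι (Q Ω'))) +
        (g (Ω + ι (Q Ω')) - g (Ω' + ι (Q Ω'))) := by
      nth_rewrite 1 [hfix Ω]
      nth_rewrite 1 [hfix Ω']
      ring
    have h3 : |Q Ω - Q Ω'| ≤ |g (Ω + ι (Q Ω)) - g (Ω + ι (Q Ω'))| +
        |g (Ω + ι (Q Ω')) - g (Ω' + ι (Q Ω'))| := by
      rw [h2]; exact abs_add_le _ _
    rw [inv_mul_eq_div, le_div_iff₀ hone]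
    nlinarith [abs_nonneg (Q Ω - Q Ω')]
  have hQcont : Continuous Q := by
    rw [continuous_iff_continuousAt]
    intro Ω₀
    have hc : Continuous (fun Ω : Fin N → AddCircle (1:ℝ) =>
        (1 - κ)⁻¹ * |g (Ω + ι (Q Ω₀)) - g (Ω₀ + ι (Q Ω₀))|) := by
      apply Continuous.mul continuous_const
      apply Continuous.abs
      exact (hgcont.comp (continuous_id.add continuous_const)).sub continuous_const
    have htend : Filter.Tendsto (fun Ω : Fin N → AddCircle (1:ℝ) =>
        (1 - κ)⁻¹ * |g (Ω + ι (Q Ω₀)) - g (Ω₀ + ι (Q Ω₀))|) (nhds Ω₀) (nhds 0) := by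
      have := hc.continuousAt (x := Ω₀)
      simpa [ContinuousAt] using this
    refine tendsto_iff_dist_tendsto_zero.2 ?_
    refine squeeze_zero (fun _ => dist_nonneg) (fun Ω => ?_) htend
    simpa [Real.dist_eq] using key Ω Ω₀
  -- inverse formula
  have hinv : ∀ (Θ : Fin N → AddCircle (1:ℝ)) (ψ : ℝ),
      (ψ + Q (Θ + ι ψ)) - g (Θ + ι (ψ + Q (Θ + ι ψ))) = ψ := by
    intro Θ ψ
    have h := hfix (Θ + ι ψ)
    rw [hadd ψ (Q (Θ + ι ψ)), ← add_assoc, ← h]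
    ring
  refine ⟨Q, hQcont, fun Ω => ⟨hfix Ω, hbound Ω, huniq Ω⟩, fun Θ => ⟨⟨?_, ?_⟩, hinv Θ⟩⟩
  · -- injective
    intro φ₁ φ₂ h
    simp only at h
    have hl := hlip' Θ φ₁ φ₂
    have h2 : φ₁ - φ₂ = g (Θ + ι φ₁) - g (Θ + ι φ₂) := by linarith
    have h3 : |φ₁ - φ₂| ≤ κ * |φ₁ - φ₂| := by nth_rewrite 1 [h2]; exact hl
    have h4 : |φ₁ - φ₂| = 0 := by nlinarith [abs_nonneg (φ₁ - φ₂)]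
    have := abs_eq_zero.1 h4
    linarith
  · -- surjective
    intro ψ
    exact ⟨ψ + Q (Θ + ι ψ), hinv Θ ψ⟩
end
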